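/- Let γ ∈ (0,1) and 0 < ȳ. Define C₁ = (ȳ − ȳ^γ)/(ȳ − 1) if ȳ ≠ 1 and C₁ = 1 − γ if ȳ = 1. Then for every y ≥ ȳ one has (y − 1)(y^γ − y) ≤ −C₁ (y − 1)². -/

import Mathlib

/-- Bernoulli tangent: for `y ≥ 0` and `0 < γ < 1`, `y ^ γ ≤ 1 + γ * (y - 1)`. -/
lemma rpow_le_tangent {γ y : ℝ} (hγ0 : 0 < γ) (hγ1 : γ < 1) (hy : 0 ≤ y) :
    y ^ γ ≤ 1 + γ * (y - 1) := by
  have h := rpow_one_add_le_one_add_mul_self (s := y - 1) (by linarith) hγ0.le hγ1.le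
  simpa using h

/-- The function `g y = y - y^γ` is convex on `[0, ∞)`. -/
lemma convexOn_sub_rpow {γ : ℝ} (hγ0 : 0 ≤ γ) (hγ1 : γ ≤ 1) :
    ConvexOn ℝ (Set.Ici 0) (fun y : ℝ => y - y ^ γ) := by
  have h := (Real.concaveOn_rpow hγ0 hγ1).neg
  have h2 : ConvexOn ℝ (Set.Ici 0) ((id : ℝ → ℝ) + -fun x : ℝ => x ^ γ) := (convexOn_id (convex_Ici (0:ℝ))).add h
  convert h2 using 1
  funext y; simp [sub_eq_add_neg]

theorem power_law_negative_drift
    (γ : ℝ) (hγ0 : 0 < γ) (hγ1 : γ < 1)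
    (ybar : ℝ) (hybar : 0 < ybar)
    (C₁ : ℝ)
    (hC₁ : C₁ = if ybar = 1 then 1 - γ else (ybar - ybar ^ γ) / (ybar - 1)) :
    ∀ y : ℝ, ybar ≤ y → (y - 1) * (y ^ γ - y) ≤ -C₁ * (y - 1) ^ 2 := by
  intro y hy
  have hy0 : 0 < y := lt_of_lt_of_le hybar hy
  have hconv := convexOn_sub_rpow hγ0.le hγ1.le
  by_cases hy1 : y = 1
  · subst hy1; simp
  by_cases hb1 : ybar = 1
  · -- C₁ = 1 - γ, ybar = 1 so y ≥ 1, y > 1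
    subst hb1
    rw [if_pos rfl] at hC₁
    have hyge : (1:ℝ) ≤ y := hy
    have htan : y ^ γ ≤ 1 + γ * (y - 1) := rpow_le_tangent hγ0 hγ1 hy0.le
    -- (y-1)(y^γ - y) ≤ (y-1)(1 + γ(y-1) - y) = -(1-γ)(y-1)^2
    nlinarith [sq_nonneg (y - 1), mul_nonneg (sub_nonneg.2 hyge) (sub_nonneg.2 htan)]
  · rw [if_neg hb1] at hC₁
    -- secant slopes of g through 1 are monotone
    have hsec : (ybar - ybar ^ γ - (1 - (1:ℝ) ^ γ)) / (ybar - 1)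
        ≤ (y - y ^ γ - (1 - (1:ℝ) ^ γ)) / (y - 1) := by
      exact hconv.secant_mono (a := 1) (x := ybar) (y := y)
        (Set.mem_Ici.2 zero_le_one) (Set.mem_Ici.2 hybar.le) (Set.mem_Ici.2 hy0.le)
        hb1 hy1 hy
    rw [Real.one_rpow] at hsec
    simp only [sub_self, sub_zero] at hsec
    have hC : C₁ ≤ (y - y ^ γ) / (y - 1) := by rw [hC₁]; exact hsec
    have hne : y - 1 ≠ 0 := sub_ne_zero.2 hy1
    have hsq : (0:ℝ) < (y - 1) ^ 2 := by positivity
    have := mul_le_mul_of_nonneg_right hC hsq.le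
    have heq : (y - y ^ γ) / (y - 1) * (y - 1) ^ 2 = (y - 1) * (y - y ^ γ) := by
      field_simp
    nlinarith [this]
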